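/- In the polynomial ring H^G_{k⁺ⁱ}, for every α ≥ 0 the recursively defined dual elements slide across the inclusions as follows: (a) φ^G(x̄(k)_{j,α}) = ψ^G(x̄(₊ᵢk)_{j,α}) for every j ≠ i, i+1; (b) φ^G(x̄(k)_{i,α}) = ψ^G(x̄(₊ᵢk)_{i,α−1})·ξ + ψ^G(x̄(₊ᵢk)_{i,α}) and φ^G(x̄(k)_{i+1,α}) = Σ_{f=0}^{α} (−1)^f ψ^G(x̄(₊ᵢk)_{i+1,α−f})·ξ^f; (c) ψ^G(x̄(₊ᵢk)_{i,α}) = Σ_{f=0}^{α} (−1)^f φ^G(x̄(k)_{i,α−f})·ξ^f and ψ^G(x̄(₊ᵢk)_{i+1,α}) = φ^G(x̄(k)_{i+1,α−1})·ξ + φ^G(x̄(k)_{i+1,α}). -/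

import Mathlib

/-!
Equivariant cohomology rings of `n`-step partial flag varieties (polynomial rings),
following Khovanov–Lauda, Section 5.3 (Equivariant representation).
-/

open MvPolynomial Finset

noncomputable section

variable (𝕜 : Type) [Field 𝕜]

/-- The generator `x(k)_{j,α}` of the equivariant cohomology ring `H^G_k` (a polynomial
ring), with the conventions `x(k)_{j,0} = 1` and `x(k)_{j,α} = 0` out of range. -/
def xp (n : ℕ) (k : ℕ → ℕ) (j α : ℕ) : MvPolynomial (ℕ × ℕ) 𝕜 :=
  if α = 0 then 1 else if 1 ≤ j ∧ j ≤ n ∧ α ≤ k j - k (j - 1) then X (j, α) else 0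

/-- The dual element `x̄(k)_{j,α} ∈ H^G_k`, defined recursively by `x̄(k)_{j,0} = 1` and
`x̄(k)_{j,α} = -∑_{f=1}^{α} x(k)_{j,f} x̄(k)_{j,α-f}` for `α ≥ 1`. -/
def xbarG (n : ℕ) (k : ℕ → ℕ) (j : ℕ) : ℕ → MvPolynomial (ℕ × ℕ) 𝕜
  | 0 => 1
  | (α + 1) => - ∑ f ∈ Finset.range (α + 1), xp 𝕜 n k j (f + 1) * xbarG n k j (α - f)
  termination_by α => α
  decreasing_by exact Nat.lt_succ_of_le (Nat.sub_le α f)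

/-- The dual element with an integer index, with `x̄(k)_{j,α} = 0` for `α < 0`. -/
def xbarGZ (n : ℕ) (k : ℕ → ℕ) (j : ℕ) (α : ℤ) : MvPolynomial (ℕ × ℕ) 𝕜 :=
  if 0 ≤ α then xbarG 𝕜 n k j α.toNat else 0

/-- The sequence `₊ᵢk`, obtained from `k` by replacing `k i` with `k i + 1`. -/
def kup (k : ℕ → ℕ) (i : ℕ) : ℕ → ℕ := fun j => if j = i then k i + 1 else k j

/-- The generator `x_{j,α}` (for `j ≠ i + 1`) of `H^G_{k⁺ⁱ}`, with conventions. -/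
def yp (n : ℕ) (k : ℕ → ℕ) (i j α : ℕ) : MvPolynomial (ℕ × ℕ) 𝕜 :=
  if α = 0 then 1
  else if 1 ≤ j ∧ j ≤ n ∧ j ≠ i + 1 ∧ α ≤ k j - k (j - 1) then X (j, α) else 0

/-- The generator `x'_{i+1,α}` of `H^G_{k⁺ⁱ}`, with conventions. -/
def y'p (n : ℕ) (k : ℕ → ℕ) (i α : ℕ) : MvPolynomial (ℕ × ℕ) 𝕜 :=
  if α = 0 then 1 else if α ≤ k (i + 1) - k i - 1 then X (i + 1, α) else 0

/-- The degree `2` generator `ξ` of `H^G_{k⁺ⁱ}`. -/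
def xiG : MvPolynomial (ℕ × ℕ) 𝕜 := X (0, 1)

/-- `φ^G : H^G_k → H^G_{k⁺ⁱ}` is the `𝕜`-algebra homomorphism determined by
`φ^G(x(k)_{j,α}) = x_{j,α}` for `j ≠ i+1` and
`φ^G(x(k)_{i+1,α}) = ξ·x'_{i+1,α-1} + x'_{i+1,α}`. -/
def IsPhiG (n : ℕ) (k : ℕ → ℕ) (i : ℕ)
    (φ : MvPolynomial (ℕ × ℕ) 𝕜 →ₐ[𝕜] MvPolynomial (ℕ × ℕ) 𝕜) : Prop :=
  (∀ j α : ℕ, j ≠ i + 1 → φ (xp 𝕜 n k j α) = yp 𝕜 n k i j α) ∧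
  (∀ α : ℕ, 1 ≤ α → φ (xp 𝕜 n k (i + 1) α) =
    xiG 𝕜 * y'p 𝕜 n k i (α - 1) + y'p 𝕜 n k i α)

/-- `ψ^G : H^G_{₊ᵢk} → H^G_{k⁺ⁱ}` is the `𝕜`-algebra homomorphism determined by
`ψ^G(x(₊ᵢk)_{j,α}) = x_{j,α}` for `j ≠ i, i+1`, `ψ^G(x(₊ᵢk)_{i+1,α}) = x'_{i+1,α}`,
and `ψ^G(x(₊ᵢk)_{i,α}) = ξ·x_{i,α-1} + x_{i,α}`. -/
def IsPsiG (n : ℕ) (k : ℕ → ℕ) (i : ℕ)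
    (ψ : MvPolynomial (ℕ × ℕ) 𝕜 →ₐ[𝕜] MvPolynomial (ℕ × ℕ) 𝕜) : Prop :=
  (∀ j α : ℕ, j ≠ i → j ≠ i + 1 → ψ (xp 𝕜 n (kup k i) j α) = yp 𝕜 n k i j α) ∧
  (∀ α : ℕ, ψ (xp 𝕜 n (kup k i) (i + 1) α) = y'p 𝕜 n k i α) ∧
  (∀ α : ℕ, 1 ≤ α → ψ (xp 𝕜 n (kup k i) i α) =
    xiG 𝕜 * yp 𝕜 n k i i (α - 1) + yp 𝕜 n k i i α)

end

section DbarAux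

open PowerSeries Finset

variable {R : Type*} [CommRing R]

/-- Generic dual sequence: coefficients of the inverse power series. -/
noncomputable def dbar (A : ℕ → R) : ℕ → R
  | 0 => 1
  | (α + 1) => - ∑ f ∈ Finset.range (α + 1), A (f + 1) * dbar A (α - f)
  termination_by α => α
  decreasing_by exact Nat.lt_succ_of_le (Nat.sub_le α f)

lemma dbar_zero (A : ℕ → R) : dbar A 0 = 1 := by rw [dbar]

lemma dbar_succ (A : ℕ → R) (α : ℕ) :
    dbar A (α + 1) = - ∑ f ∈ Finset.range (α + 1), A (f + 1) * dbar A (α - f) := by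
  rw [dbar]

lemma dbar_congr (A B : ℕ → R) (h : ∀ f : ℕ, A (f + 1) = B (f + 1)) (α : ℕ) :
    dbar A α = dbar B α := by
  induction α using Nat.strong_induction_on with
  | _ α ih =>
    match α with
    | 0 => rw [dbar_zero, dbar_zero]
    | β + 1 =>
      rw [dbar_succ, dbar_succ]
      congr 1
      refine Finset.sum_congr rfl fun f hf => ?_
      rw [h, ih (β - f) (Nat.lt_succ_of_le (Nat.sub_le β f))]

lemma dbar_conv (A : ℕ → R) (hA : A 0 = 1) (β : ℕ) :
    ∑ f ∈ Finset.range (β + 2), A f * dbar A (β + 1 - f) = 0 := by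
  rw [Finset.sum_range_succ']
  simp only [Nat.succ_sub_succ, Nat.sub_zero]
  rw [hA, one_mul, dbar_succ, add_neg_cancel]

lemma mk_dbar_inv (A : ℕ → R) (hA : A 0 = 1) :
    PowerSeries.mk A * PowerSeries.mk (dbar A) = 1 := by
  ext n
  rw [PowerSeries.coeff_mul, Finset.Nat.sum_antidiagonal_eq_sum_range_succ_mk]
  simp only [PowerSeries.coeff_mk, PowerSeries.coeff_one]
  match n with
  | 0 => simp [hA, dbar_zero]
  | β + 1 => simpa using dbar_conv A hA β

lemma inv_unique' (P Q Q' : PowerSeries R) (h : P * Q = 1) (h' : P * Q' = 1) : Q = Q' := by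
  calc Q = Q * (P * Q') := by rw [h', mul_one]
  _ = Q' * (P * Q) := by ring
  _ = Q' := by rw [h, mul_one]

lemma coeff_one_add_CX_mul (ξ : R) (S : PowerSeries R) (n : ℕ) :
    (PowerSeries.coeff (n + 1)) ((1 + PowerSeries.C ξ * PowerSeries.X) * S) =
      PowerSeries.coeff (n + 1) S + ξ * PowerSeries.coeff n S := by
  rw [add_mul, one_mul, map_add, mul_assoc, PowerSeries.coeff_C_mul,
    PowerSeries.coeff_succ_X_mul]

lemma series_rel (ξ : R) (A B : ℕ → R) (hA : A 0 = 1) (hB : B 0 = 1)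
    (hrel : ∀ f : ℕ, A (f + 1) = ξ * B f + B (f + 1)) :
    PowerSeries.mk A = (1 + PowerSeries.C ξ * PowerSeries.X) * PowerSeries.mk B := by
  ext n
  match n with
  | 0 =>
    simp only [PowerSeries.coeff_zero_eq_constantCoeff, map_mul, map_add, map_one,
      PowerSeries.constantCoeff_C, PowerSeries.constantCoeff_X, mul_zero, add_zero,
      PowerSeries.constantCoeff_mk, one_mul]
    rw [hA, hB]
  | β + 1 =>
    rw [coeff_one_add_CX_mul]
    simp only [PowerSeries.coeff_mk]
    rw [hrel β]; ring

lemma geom_inv (ξ : R) :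
    (1 + PowerSeries.C ξ * PowerSeries.X) * PowerSeries.mk (fun f => (-ξ) ^ f) = 1 := by
  ext n
  match n with
  | 0 =>
    simp only [PowerSeries.coeff_zero_eq_constantCoeff, map_mul, map_add, map_one,
      PowerSeries.constantCoeff_C, PowerSeries.constantCoeff_X, mul_zero, add_zero,
      PowerSeries.constantCoeff_mk, one_mul, pow_zero]
  | β + 1 =>
    rw [coeff_one_add_CX_mul]
    simp only [PowerSeries.coeff_mk, PowerSeries.coeff_one, Nat.succ_ne_zero, if_false]
    rw [pow_succ]
    ring

lemma dbar_B_series (ξ : R) (A B : ℕ → R) (hA : A 0 = 1) (hB : B 0 = 1)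
    (hrel : ∀ f : ℕ, A (f + 1) = ξ * B f + B (f + 1)) :
    PowerSeries.mk (dbar B) =
      (1 + PowerSeries.C ξ * PowerSeries.X) * PowerSeries.mk (dbar A) := by
  refine inv_unique' (PowerSeries.mk B) _ _ (mk_dbar_inv B hB) ?_
  have h1 : PowerSeries.mk B * ((1 + PowerSeries.C ξ * PowerSeries.X) *
      PowerSeries.mk (dbar A)) = PowerSeries.mk A * PowerSeries.mk (dbar A) := by
    rw [series_rel ξ A B hA hB hrel]; ring
  rw [h1, mk_dbar_inv A hA]

lemma dbar_shift (ξ : R) (A B : ℕ → R) (hA : A 0 = 1) (hB : B 0 = 1)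
    (hrel : ∀ f : ℕ, A (f + 1) = ξ * B f + B (f + 1)) (α : ℕ) :
    dbar B (α + 1) = ξ * dbar A α + dbar A (α + 1) := by
  have := congrArg (PowerSeries.coeff (α + 1)) (dbar_B_series ξ A B hA hB hrel)
  rw [coeff_one_add_CX_mul] at this
  simpa [PowerSeries.coeff_mk, add_comm] using this

lemma dbar_geom (ξ : R) (A B : ℕ → R) (hA : A 0 = 1) (hB : B 0 = 1)
    (hrel : ∀ f : ℕ, A (f + 1) = ξ * B f + B (f + 1)) (α : ℕ) :
    dbar A α = ∑ f ∈ Finset.range (α + 1), (-ξ) ^ f * dbar B (α - f) := by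
  have hser : PowerSeries.mk (dbar A) =
      PowerSeries.mk (fun f => (-ξ) ^ f) * PowerSeries.mk (dbar B) := by
    refine inv_unique' (PowerSeries.mk A) _ _ (mk_dbar_inv A hA) ?_
    have h1 : PowerSeries.mk A * (PowerSeries.mk (fun f => (-ξ) ^ f) *
        PowerSeries.mk (dbar B)) =
        ((1 + PowerSeries.C ξ * PowerSeries.X) * PowerSeries.mk (fun f => (-ξ) ^ f)) *
          (PowerSeries.mk B * PowerSeries.mk (dbar B)) := by
      rw [series_rel ξ A B hA hB hrel]; ring
    rw [h1, geom_inv, mk_dbar_inv B hB, one_mul]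
  have := congrArg (PowerSeries.coeff α) hser
  rw [PowerSeries.coeff_mul, Finset.Nat.sum_antidiagonal_eq_sum_range_succ_mk] at this
  simpa [PowerSeries.coeff_mk] using this

end DbarAux

section MapAux

variable (𝕜 : Type) [Field 𝕜]

lemma map_xbarG (F : MvPolynomial (ℕ × ℕ) 𝕜 →ₐ[𝕜] MvPolynomial (ℕ × ℕ) 𝕜)
    (n : ℕ) (k : ℕ → ℕ) (j : ℕ) (α : ℕ) :
    F (xbarG 𝕜 n k j α) = dbar (fun a => F (xp 𝕜 n k j a)) α := by
  induction α using Nat.strong_induction_on with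
  | _ α ih =>
    match α with
    | 0 => rw [xbarG, dbar_zero, map_one]
    | β + 1 =>
      rw [xbarG, dbar_succ, map_neg, map_sum]
      congr 1
      refine Finset.sum_congr rfl fun f hf => ?_
      rw [map_mul, ih (β - f) (Nat.lt_succ_of_le (Nat.sub_le β f))]

lemma map_xp_zero (F : MvPolynomial (ℕ × ℕ) 𝕜 →ₐ[𝕜] MvPolynomial (ℕ × ℕ) 𝕜)
    (n : ℕ) (k : ℕ → ℕ) (j : ℕ) : F (xp 𝕜 n k j 0) = 1 := by
  simp [xp]

end MapAux


section GStatements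

variable (𝕜 : Type) [Field 𝕜]

theorem stmt16 (n N i : ℕ) (k : ℕ → ℕ)
    (hn : 1 ≤ n) (hk0 : k 0 = 0) (hkN : k n = N) (hmono : ∀ j, j < n → k j ≤ k (j + 1))
    (hi1 : 1 ≤ i) (hin : i + 1 ≤ n) (hik : k i < k (i + 1))
    (φG : MvPolynomial (ℕ × ℕ) 𝕜 →ₐ[𝕜] MvPolynomial (ℕ × ℕ) 𝕜) (hφ : IsPhiG 𝕜 n k i φG)
    (ψG : MvPolynomial (ℕ × ℕ) 𝕜 →ₐ[𝕜] MvPolynomial (ℕ × ℕ) 𝕜) (hψ : IsPsiG 𝕜 n k i ψG) :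
    (∀ j α : ℕ, 1 ≤ j → j ≤ n → j ≠ i → j ≠ i + 1 →
      φG (xbarG 𝕜 n k j α) = ψG (xbarG 𝕜 n (kup k i) j α)) ∧
    (∀ α : ℕ, φG (xbarG 𝕜 n k i α) =
      ψG (xbarGZ 𝕜 n (kup k i) i ((α : ℤ) - 1)) * xiG 𝕜 +
        ψG (xbarG 𝕜 n (kup k i) i α)) ∧
    (∀ α : ℕ, φG (xbarG 𝕜 n k (i + 1) α) =
      ∑ f ∈ Finset.range (α + 1),
        (-1 : MvPolynomial (ℕ × ℕ) 𝕜) ^ f *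
          ψG (xbarG 𝕜 n (kup k i) (i + 1) (α - f)) * xiG 𝕜 ^ f) ∧
    (∀ α : ℕ, ψG (xbarG 𝕜 n (kup k i) i α) =
      ∑ f ∈ Finset.range (α + 1),
        (-1 : MvPolynomial (ℕ × ℕ) 𝕜) ^ f *
          φG (xbarG 𝕜 n k i (α - f)) * xiG 𝕜 ^ f) ∧
    (∀ α : ℕ, ψG (xbarG 𝕜 n (kup k i) (i + 1) α) =
      φG (xbarGZ 𝕜 n k (i + 1) ((α : ℤ) - 1)) * xiG 𝕜 +
        φG (xbarG 𝕜 n k (i + 1) α)) := by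
  obtain ⟨hφ1, hφ2⟩ := hφ
  obtain ⟨hψ1, hψ2, hψ3⟩ := hψ
  have hBi_y : ∀ f, φG (xp 𝕜 n k i f) = yp 𝕜 n k i i f := by
    intro f
    cases f with
    | zero => simp [xp, yp]
    | succ g => exact hφ1 i (g + 1) (by omega)
  have hAi0 : (fun a => ψG (xp 𝕜 n (kup k i) i a)) 0 = 1 := map_xp_zero 𝕜 ψG n (kup k i) i
  have hBi0 : (fun a => φG (xp 𝕜 n k i a)) 0 = 1 := map_xp_zero 𝕜 φG n k i
  have hA10 : (fun a => φG (xp 𝕜 n k (i + 1) a)) 0 = 1 := map_xp_zero 𝕜 φG n k (i + 1)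
  have hB10 : (fun a => ψG (xp 𝕜 n (kup k i) (i + 1) a)) 0 = 1 :=
    map_xp_zero 𝕜 ψG n (kup k i) (i + 1)
  have hreli : ∀ f, ψG (xp 𝕜 n (kup k i) i (f + 1)) =
      xiG 𝕜 * φG (xp 𝕜 n k i f) + φG (xp 𝕜 n k i (f + 1)) := by
    intro f
    rw [hψ3 (f + 1) (by omega)]
    simp only [Nat.add_sub_cancel]
    rw [hBi_y f, hBi_y (f + 1)]
  have hrel1 : ∀ f, φG (xp 𝕜 n k (i + 1) (f + 1)) =
      xiG 𝕜 * ψG (xp 𝕜 n (kup k i) (i + 1) f) + ψG (xp 𝕜 n (kup k i) (i + 1) (f + 1)) := by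
    intro f
    rw [hφ2 (f + 1) (by omega)]
    simp only [Nat.add_sub_cancel]
    rw [hψ2 f, hψ2 (f + 1)]
  refine ⟨?_, ?_, ?_, ?_, ?_⟩
  · intro j α h1 h2 h3 h4
    rw [map_xbarG, map_xbarG]
    exact dbar_congr _ _ (fun f => by
      show φG (xp 𝕜 n k j (f + 1)) = ψG (xp 𝕜 n (kup k i) j (f + 1))
      rw [hφ1 j (f + 1) h4, hψ1 j (f + 1) h3 h4]) α
  · intro α
    cases α with
    | zero =>
      have h0 : xbarGZ 𝕜 n (kup k i) i ((↑(0 : ℕ) : ℤ) - 1) = 0 := by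
        rw [xbarGZ, if_neg (by omega)]
      rw [h0, map_zero, zero_mul, zero_add, map_xbarG, map_xbarG, dbar_zero, dbar_zero]
    | succ β =>
      have hz : xbarGZ 𝕜 n (kup k i) i ((↑(β + 1) : ℤ) - 1) = xbarG 𝕜 n (kup k i) i β := by
        rw [xbarGZ, if_pos (by omega)]
        congr 1
        omega
      rw [hz, map_xbarG, map_xbarG, map_xbarG,
        dbar_shift (xiG 𝕜) (fun a => ψG (xp 𝕜 n (kup k i) i a)) (fun a => φG (xp 𝕜 n k i a)) hAi0 hBi0 hreli β]
      ring
  · intro α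
    simp only [map_xbarG]
    rw [dbar_geom (xiG 𝕜) (fun a => φG (xp 𝕜 n k (i + 1) a)) (fun a => ψG (xp 𝕜 n (kup k i) (i + 1) a)) hA10 hB10 hrel1 α]
    refine Finset.sum_congr rfl fun f hf => ?_
    rw [neg_pow]
    ring
  · intro α
    simp only [map_xbarG]
    rw [dbar_geom (xiG 𝕜) (fun a => ψG (xp 𝕜 n (kup k i) i a)) (fun a => φG (xp 𝕜 n k i a)) hAi0 hBi0 hreli α]
    refine Finset.sum_congr rfl fun f hf => ?_
    rw [neg_pow]
    ring
  · intro α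
    cases α with
    | zero =>
      have h0 : xbarGZ 𝕜 n k (i + 1) ((↑(0 : ℕ) : ℤ) - 1) = 0 := by
        rw [xbarGZ, if_neg (by omega)]
      rw [h0, map_zero, zero_mul, zero_add, map_xbarG, map_xbarG, dbar_zero, dbar_zero]
    | succ β =>
      have hz : xbarGZ 𝕜 n k (i + 1) ((↑(β + 1) : ℤ) - 1) = xbarG 𝕜 n k (i + 1) β := by
        rw [xbarGZ, if_pos (by omega)]
        congr 1
        omega
      rw [hz, map_xbarG, map_xbarG, map_xbarG,
        dbar_shift (xiG 𝕜) (fun a => φG (xp 𝕜 n k (i + 1) a)) (fun a => ψG (xp 𝕜 n (kup k i) (i + 1) a)) hA10 hB10 hrel1 β]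
      ring

end GStatements
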